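/- For any i ≥ 2 and all x, y ∈ ℝ^n, with d_i(x) = ‖x‖^i/i, one has d_i(x) − d_i(y) − ⟨∇d_i(y), x − y⟩ ≥ (1/2)^{i−2} d_i(x − y). -/

import Mathlib

open Finset
open Finset

lemma sum_ge (j : ℕ) (a c : ℝ) (h0 : 0 ≤ c) (hca : c ≤ a) :
    c ^ (j+1) + (j+1) * (a * c ^ j) ≤ ∑ k ∈ range (j+2), a ^ k * c ^ (j+1-k) := by
  have ha : 0 ≤ a := le_trans h0 hca
  calc c ^ (j+1) + (j+1) * (a * c ^ j)
      = ∑ k ∈ range (j+2), (if k = 0 then c ^ (j+1) else a * c ^ j) := by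
        rw [Finset.sum_range_succ']
        simp [add_comm]
    _ ≤ ∑ k ∈ range (j+2), a ^ k * c ^ (j+1-k) := by
        apply Finset.sum_le_sum
        intro k hk
        rw [mem_range] at hk
        rcases k with _ | k
        · simp
        · simp only [Nat.succ_ne_zero, if_false]
          have hkj : k ≤ j := by omega
          have e2 : j + 1 - (k+1) = j - k := by omega
          have e : c ^ j = c ^ k * c ^ (j - k) := by rw [← pow_add]; congr 1; omega
          rw [e2, e, pow_succ']
          have h1 : c ^ k ≤ a ^ k := pow_le_pow_left₀ h0 hca k
          have h2 : (0:ℝ) ≤ c ^ (j-k) := pow_nonneg h0 _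
          have h3 : (0:ℝ) ≤ a := ha
          nlinarith [mul_nonneg (mul_nonneg (sub_nonneg.2 h1) h2) h3]

lemma sum_le (j : ℕ) (a c : ℝ) (h0 : 0 ≤ c) (hca : c ≤ a) :
    ∑ k ∈ range (j+2), a ^ k * c ^ (j+1-k) ≤ a ^ (j+1) + (j+1) * (c * a ^ j) := by
  have ha : 0 ≤ a := le_trans h0 hca
  calc ∑ k ∈ range (j+2), a ^ k * c ^ (j+1-k)
      ≤ ∑ k ∈ range (j+2), (if k = j+1 then a ^ (j+1) else c * a ^ j) := by
        apply Finset.sum_le_sum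
        intro k hk
        rw [mem_range] at hk
        by_cases hkt : k = j+1
        · subst hkt; simp
        · simp only [hkt, if_false]
          have hkj : k ≤ j := by omega
          have e2 : j + 1 - k = (j - k) + 1 := by omega
          have e : a ^ j = a ^ k * a ^ (j - k) := by rw [← pow_add]; congr 1; omega
          rw [e2, e, pow_succ]
          have h1 : c ^ (j-k) ≤ a ^ (j-k) := pow_le_pow_left₀ h0 hca _
          have h2 : (0:ℝ) ≤ a ^ k := pow_nonneg ha _
          have h3 : (0:ℝ) ≤ c ^ (j-k) := pow_nonneg h0 _
          nlinarith [mul_nonneg (mul_nonneg (sub_nonneg.2 h1) h2) h0]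
    _ = a ^ (j+1) + (j+1) * (c * a ^ j) := by
        rw [Finset.sum_range_succ]
        simp only [if_pos rfl]
        rw [Finset.sum_congr rfl (fun k hk => if_neg (by rw [mem_range] at hk; omega))]
        simp [add_comm]

lemma lemA (j : ℕ) (a b c : ℝ) (hb : 0 ≤ b) (hbc : b ≤ c) (hca : c ≤ a) :
    ((j:ℝ)+2) * b^j * (a^2 - c^2) ≤ 2 * (a^(j+2) - c^(j+2)) := by
  have h0c : 0 ≤ c := le_trans hb hbc
  have h0a : 0 ≤ a := le_trans h0c hca
  have hid := geom_sum₂_mul a c (j+2)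
  norm_num at hid
  have hS := sum_ge j a c h0c hca
  have hbj : b^j ≤ c^j := pow_le_pow_left₀ hb hbc j
  have hcj : (0:ℝ) ≤ c^j := pow_nonneg h0c j
  have hmain : ((j:ℝ)+2) * b^j * (a + c) ≤ 2 * (c^(j+1) + ((j:ℝ)+1) * (a * c^j)) := by
    have h1 : ((j:ℝ)+2) * b^j * (a + c) ≤ ((j:ℝ)+2) * c^j * (a + c) := by
      have h4 : (0:ℝ) ≤ a + c := by linarith
      nlinarith [mul_nonneg (mul_nonneg (by positivity : (0:ℝ) ≤ (j:ℝ)+2) (sub_nonneg.2 hbj)) h4]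
    have h2 : ((j:ℝ)+2) * c^j * (a + c) ≤ 2 * (c^(j+1) + ((j:ℝ)+1) * (a * c^j)) := by
      have hc1 : c^(j+1) = c^j * c := by ring
      nlinarith [mul_nonneg hcj (sub_nonneg.2 hca), Nat.cast_nonneg (α := ℝ) j]
    linarith
  have hac : (0:ℝ) ≤ a - c := sub_nonneg.2 hca
  calc ((j:ℝ)+2) * b^j * (a^2 - c^2)
      = (((j:ℝ)+2) * b^j * (a + c)) * (a - c) := by ring
    _ ≤ (2 * (c^(j+1) + ((j:ℝ)+1) * (a * c^j))) * (a - c) := mul_le_mul_of_nonneg_right hmain hac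
    _ ≤ (2 * ∑ k ∈ range (j+2), a ^ k * c ^ (j+1-k)) * (a - c) := by
        apply mul_le_mul_of_nonneg_right _ hac
        push_cast
        linarith [hS]
    _ = 2 * (a^(j+2) - c^(j+2)) := by rw [mul_assoc, hid]

lemma lemB (j : ℕ) (a b : ℝ) (ha : 0 ≤ a) (hab : a ≤ b) :
    2 * (b^(j+2) - a^(j+2)) ≤ ((j:ℝ)+2) * b^j * (b^2 - a^2) := by
  have h0b : 0 ≤ b := le_trans ha hab
  have hid := geom_sum₂_mul b a (j+2)
  norm_num at hid
  have hS := sum_le j b a ha hab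
  have hba : (0:ℝ) ≤ b - a := sub_nonneg.2 hab
  have hbj : (0:ℝ) ≤ b^j := pow_nonneg h0b j
  have hmain : 2 * (b^(j+1) + ((j:ℝ)+1) * (a * b^j)) ≤ ((j:ℝ)+2) * b^j * (a + b) := by
    have hb1 : b^(j+1) = b^j * b := by ring
    nlinarith [mul_nonneg hbj (sub_nonneg.2 hab), Nat.cast_nonneg (α := ℝ) j]
  calc 2 * (b^(j+2) - a^(j+2))
      = (2 * ∑ k ∈ range (j+2), b ^ k * a ^ (j+1-k)) * (b - a) := by rw [mul_assoc, hid]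
    _ ≤ (2 * (b^(j+1) + ((j:ℝ)+1) * (a * b^j))) * (b - a) := by
        apply mul_le_mul_of_nonneg_right _ hba
        push_cast
        linarith [hS]
    _ ≤ (((j:ℝ)+2) * b^j * (a + b)) * (b - a) := mul_le_mul_of_nonneg_right hmain hba
    _ = ((j:ℝ)+2) * b^j * (b^2 - a^2) := by ring

lemma amgm (j : ℕ) (a b : ℝ) (ha : 0 ≤ a) (hb : 0 ≤ b) :
    ((j:ℝ)+2) * b^j * a^2 ≤ 2 * a^(j+2) + (j:ℝ) * b^(j+2) := by
  have hbb : b^j * b^2 = b^(j+2) := by ring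
  rcases le_total a b with h | h
  · have := lemB j a b ha h
    nlinarith
  · have := lemA j a b b hb le_rfl h
    nlinarith

lemma keyC2 (j : ℕ) (b t : ℝ) (hb : 0 ≤ b) (ht : 0 ≤ t) :
    4 * (t/2 + b)^(j+2) ≤ (t + b)^(j+2) + 3*b^(j+2) + ((j:ℝ)+2) * b^(j+1) * t := by
  have h1 : (t/2 + b)^(j+2) = ∑ k ∈ range (j+3), (t/2)^k * b^(j+2-k) * ((j+2).choose k : ℝ) :=
    add_pow (t/2) b (j+2)
  have h2 : (t + b)^(j+2) = ∑ k ∈ range (j+3), t^k * b^(j+2-k) * ((j+2).choose k : ℝ) :=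
    add_pow t b (j+2)
  set e : ℕ → ℝ := fun k => if k = 0 then 3*b^(j+2) else if k = 1 then ((j:ℝ)+2) * b^(j+1) * t else 0 with he
  have hsum : ∑ k ∈ range (j+3), e k = 3*b^(j+2) + ((j:ℝ)+2) * b^(j+1) * t := by
    rw [Finset.sum_range_succ', Finset.sum_range_succ']
    simp [he]
    ring
  have hterm : ∀ k ∈ range (j+3),
      4 * ((t/2)^k * b^(j+2-k) * ((j+2).choose k : ℝ))
        ≤ t^k * b^(j+2-k) * ((j+2).choose k : ℝ) + e k := by
    intro k hk
    rcases k with _ | _ | k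
    · simp [he]; nlinarith [pow_nonneg hb (j+2)]
    · simp [he, Nat.choose_one_right]
      push_cast
      ring_nf
      nlinarith [pow_nonneg hb (j+1)]
    · simp only [he, Nat.succ_ne_zero, if_false, Nat.succ_ne_zero]
      have hif : (if k + 2 = 1 then ((j:ℝ)+2) * b^(j+1) * t else 0) = 0 := by
        rw [if_neg (by omega)]
      rw [hif, add_zero]
      have hle : 4 * (t/2)^(k+2) ≤ t^(k+2) := by
        rw [div_pow]
        rw [← mul_div_assoc, div_le_iff₀ (by positivity)]
        have h8 : (4:ℝ) ≤ 2^(k+2) := by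
          calc (4:ℝ) = 2^2 := by norm_num
          _ ≤ 2^(k+2) := by
            apply pow_le_pow_right₀ (by norm_num)
            omega
        nlinarith [pow_nonneg ht (k+2)]
      have hnn : (0:ℝ) ≤ b^(j+2-(k+2)) * ((j+2).choose (k+2) : ℝ) := by positivity
      calc 4 * ((t/2)^(k+2) * b^(j+2-(k+2)) * ((j+2).choose (k+2) : ℝ))
          = (4 * (t/2)^(k+2)) * (b^(j+2-(k+2)) * ((j+2).choose (k+2) : ℝ)) := by ring
        _ ≤ t^(k+2) * (b^(j+2-(k+2)) * ((j+2).choose (k+2) : ℝ)) :=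
            mul_le_mul_of_nonneg_right hle hnn
        _ = t^(k+2) * b^(j+2-(k+2)) * ((j+2).choose (k+2) : ℝ) := by ring
  calc 4 * (t/2 + b)^(j+2)
      = ∑ k ∈ range (j+3), 4 * ((t/2)^k * b^(j+2-k) * ((j+2).choose k : ℝ)) := by
        rw [h1, Finset.mul_sum]
    _ ≤ ∑ k ∈ range (j+3), (t^k * b^(j+2-k) * ((j+2).choose k : ℝ) + e k) :=
        Finset.sum_le_sum hterm
    _ = (t + b)^(j+2) + 3*b^(j+2) + ((j:ℝ)+2) * b^(j+1) * t := by
        rw [Finset.sum_add_distrib, hsum, ← h2]; ring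

lemma c2 (j : ℕ) (b c : ℝ) (hb : 0 ≤ b) (hbc : b ≤ c) :
    ((1:ℝ)/2)^j * (b+c)^(j+2) ≤ c^(j+2) - b^(j+2) + ((j:ℝ)+2) * b^(j+1) * (b+c) := by
  have ht : 0 ≤ c - b := sub_nonneg.2 hbc
  have key := keyC2 j b (c - b) hb ht
  have e1 : ((1:ℝ)/2)^j * (b+c)^(j+2) = 4 * ((c-b)/2 + b)^(j+2) := by
    have h2 : (c-b)/2 + b = (b+c) * (1/2) := by ring
    rw [h2, mul_pow, one_div, inv_pow, ← one_div]
    rw [show j + 2 = j + 2 from rfl, pow_add]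
    field_simp
    have h3 : ((1:ℝ)/2)^j * 2^j = 1 := by rw [← mul_pow]; norm_num
    linear_combination (-(b+c)^j*(b+c)^2) * h3
  rw [e1]
  have e2 : (c - b + b) = c := by ring
  rw [e2] at key
  have hbb : b^(j+1) * b = b^(j+2) := by ring
  nlinarith [key, mul_nonneg (Nat.cast_nonneg (α := ℝ) j) (pow_nonneg hb (j+2)),
    pow_nonneg hb (j+2)]

lemma scalar_key (j : ℕ) (a b r s : ℝ) (ha : 0 ≤ a) (hb : 0 ≤ b) (hr : 0 ≤ r)
    (hid : a^2 = b^2 + 2*s + r^2) (htri : r ≤ a + b) :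
    ((1:ℝ)/2)^j * r^(j+2) ≤ a^(j+2) - b^(j+2) - ((j:ℝ)+2) * b^j * s := by
  have hs : s = (a^2 - b^2 - r^2)/2 := by linarith
  subst hs
  rcases le_total r (2*b) with h | h
  · -- r ≤ 2b
    have h1 := amgm j a b ha hb
    have h2 : r^j ≤ (2*b)^j := pow_le_pow_left₀ hr h j
    have h3 : ((1:ℝ)/2)^j * r^(j+2) ≤ b^j * r^2 := by
      calc ((1:ℝ)/2)^j * r^(j+2) = ((1:ℝ)/2)^j * r^j * r^2 := by ring
        _ ≤ ((1:ℝ)/2)^j * (2*b)^j * r^2 := by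
            apply mul_le_mul_of_nonneg_right _ (sq_nonneg r)
            exact mul_le_mul_of_nonneg_left h2 (by positivity)
        _ = b^j * r^2 := by rw [← mul_pow, show (1:ℝ)/2*(2*b) = b by ring]
    have hb2 : b^j * b^2 = b^(j+2) := by ring
    have hjr : (0:ℝ) ≤ (j:ℝ) * (b^j * r^2) := by positivity
    have hbr : (0:ℝ) ≤ b^j * r^2 := by positivity
    nlinarith [h1, h3]
  · -- 2b ≤ r
    have hbc : b ≤ r - b := by linarith
    have hca : r - b ≤ a := by linarith
    have hA := lemA j a b (r-b) hb hbc hca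
    have hC := c2 j b (r-b) hb hbc
    have e2 : b + (r - b) = r := by ring
    rw [e2] at hC
    have hb1 : b^(j+1) = b^j * b := by ring
    rw [hb1] at hC
    linarith [hA, hC]

open RealInnerProductSpace

/-- Uniform convexity inequality for `d_i(x) = ‖x‖^i / i`. -/
theorem stmt_8 {n : ℕ} (i : ℕ) (hi : 2 ≤ i) (x y : EuclideanSpace ℝ (Fin n)) :
    ((1 : ℝ) / 2) ^ (i - 2) * (‖x - y‖ ^ i / i)
      ≤ ‖x‖ ^ i / i - ‖y‖ ^ i / i - ⟪(‖y‖ ^ (i - 2)) • y, x - y⟫ := by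
  obtain ⟨j, rfl⟩ : ∃ j, i = j + 2 := ⟨i - 2, by omega⟩
  have hsub : j + 2 - 2 = j := by omega
  rw [hsub, real_inner_smul_left]
  have hx : y + (x - y) = x := by abel
  have h1 : ‖x‖^2 = ‖y‖^2 + 2*⟪y, x - y⟫ + ‖x-y‖^2 := by
    have h := norm_add_sq_real y (x - y)
    rwa [hx] at h
  have htri : ‖x - y‖ ≤ ‖x‖ + ‖y‖ := norm_sub_le x y
  have key := scalar_key j ‖x‖ ‖y‖ ‖x-y‖ ⟪y, x-y⟫ (norm_nonneg x) (norm_nonneg y)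
    (norm_nonneg _) h1 htri
  have e2 : ‖x‖^(j+2)/((j:ℝ)+2) - ‖y‖^(j+2)/((j:ℝ)+2) - ‖y‖^j * ⟪y, x-y⟫
      = (‖x‖^(j+2) - ‖y‖^(j+2) - ((j:ℝ)+2) * ‖y‖^j * ⟪y, x-y⟫)/((j:ℝ)+2) := by
    field_simp
  have e3 : ((1:ℝ)/2)^j * (‖x-y‖^(j+2)/((j:ℝ)+2)) = (((1:ℝ)/2)^j * ‖x-y‖^(j+2))/((j:ℝ)+2) := by
    ring
  push_cast
  rw [e3, e2]
  exact div_le_div_of_nonneg_right key (by positivity)
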